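/- Let a, b be positive integers, S, S' nonnegative integers, and let α' and β' be nonnegative integers with α' ≤ a−1 and a·β' + b·α' = S'. If S' ≤ S + 1 − (a−1)(b−1), then every pair (u,v) ∈ ℕ × ℕ with u ≤ β' + b − 1, v ≤ a − 1, and not both u ≥ β' and v ≥ α', satisfies a·u + b·v ≤ S. (Consequently the remainder set R is contained in the monomial set of L(S·P_∞), so M = R in case (2) of the paper's Proposition; note 2·g_{a,b} = (a−1)(b−1) where g_{a,b} is the genus of the C_{a,b} curve.) -/
import Mathlib


/-- Case (2) of the paper's Proposition on `M_i(s,g)`: if `S' ≤ S + 1 − (a−1)(b−1)` then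
every lattice point `(u,v)` of the remainder set `R` lies in the monomial set of `L(S·P_∞)`. -/
theorem stmt_13 (a b S S' α' β' : ℕ) (ha : 0 < a) (hb : 0 < b)
    (hα' : α' ≤ a - 1) (hS' : a * β' + b * α' = S')
    (h : (S' : ℤ) ≤ (S : ℤ) + 1 - ((a : ℤ) - 1) * ((b : ℤ) - 1)) :
    ∀ u v : ℕ, u ≤ β' + b - 1 → v ≤ a - 1 → ¬(β' ≤ u ∧ α' ≤ v) →
      a * u + b * v ≤ S := by
  intro u v hu hv hn
  have hu' : u ≤ β' + b - 1 := hu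
  have h1 : u + 1 ≤ β' + b := by omega
  have h2 : v + 1 ≤ a := by omega
  have hcase : u + 1 ≤ β' ∨ v + 1 ≤ α' := by omega
  have key : (a : ℤ) * u + b * v ≤ S := by
    subst hS'
    push_cast at h ⊢
    rcases hcase with hc | hc
    · have hc' : (u : ℤ) + 1 ≤ β' := by exact_mod_cast hc
      have h2' : (v : ℤ) + 1 ≤ a := by exact_mod_cast h2
      nlinarith [mul_nonneg (Nat.cast_nonneg b : (0:ℤ) ≤ b) (Nat.cast_nonneg α' : (0:ℤ) ≤ α'),
        mul_le_mul_of_nonneg_left hc' (Nat.cast_nonneg a : (0:ℤ) ≤ a),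
        mul_le_mul_of_nonneg_left (show (v:ℤ) ≤ (a:ℤ) - 1 by linarith) (Nat.cast_nonneg b : (0:ℤ) ≤ b)]
    · have hc' : (v : ℤ) + 1 ≤ α' := by exact_mod_cast hc
      have h1' : (u : ℤ) + 1 ≤ β' + b := by exact_mod_cast h1
      nlinarith [mul_le_mul_of_nonneg_left hc' (Nat.cast_nonneg b : (0:ℤ) ≤ b),
        mul_le_mul_of_nonneg_left h1' (Nat.cast_nonneg a : (0:ℤ) ≤ a)]
  exact_mod_cast key
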